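/- Let G=(V,E) be a graph and N a regular tree set of finite-order separations of G such that for every infinite strictly increasing chain (A_1,B_1) < (A_2,B_2) < … of orientations of elements of N one has ⋂_{i∈ℕ} B_i = ∅. Then there exists a tree-decomposition (T,(V_t)_{t∈T}) of G whose set of induced separations is exactly the set of orientations of elements of N. -/

import Mathlib

/-- A separation of a graph `G`: a pair of vertex sets covering `V` with no edge
between `A ∖ B` and `B ∖ A`. -/
structure GraphSep {V : Type} (G : SimpleGraph V) where
  A : Set V
  B : Set V
  union_eq : A ∪ B = Set.univ
  no_edge : ∀ a ∈ A \ B, ∀ b ∈ B \ A, ¬ G.Adj a b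

namespace GraphSep

variable {V V' : Type} {G : SimpleGraph V} {G' : SimpleGraph V'}

/-- The inverse `(B,A)` of a separation `(A,B)`. -/
def inv (s : GraphSep G) : GraphSep G where
  A := s.B
  B := s.A
  union_eq := by rw [Set.union_comm]; exact s.union_eq
  no_edge := fun a ha b hb h => s.no_edge b hb a ha h.symm

/-- The separator `A ∩ B`. -/
def sepSet (s : GraphSep G) : Set V := s.A ∩ s.B

/-- The order `|A ∩ B|` of a separation, as an extended natural number. -/
noncomputable def order (s : GraphSep G) : ℕ∞ := (s.A ∩ s.B).encard

/-- `(A,B) ≤ (C,D)` iff `A ⊆ C` and `D ⊆ B`. -/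
protected def le (s t : GraphSep G) : Prop := s.A ⊆ t.A ∧ t.B ⊆ s.B

/-- Two separations are nested if after possibly replacing either by its inverse
they are `≤`-comparable. -/
def Nested (s t : GraphSep G) : Prop :=
  s.le t ∨ s.le t.inv ∨ s.inv.le t ∨ s.inv.le t.inv

lemma mem_A_or_B (s : GraphSep G) (x : V) : x ∈ s.A ∨ x ∈ s.B := by
  have h : x ∈ s.A ∪ s.B := by rw [s.union_eq]; exact Set.mem_univ x
  exact (Set.mem_union _ _ _).1 h

/-- The join `(A,B) ∨ (C,D) = (A ∪ C, B ∩ D)`. -/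
def join (s t : GraphSep G) : GraphSep G where
  A := s.A ∪ t.A
  B := s.B ∩ t.B
  union_eq := by
    apply Set.eq_univ_of_forall
    intro x
    rcases s.mem_A_or_B x with h1 | h1
    · exact Or.inl (Or.inl h1)
    · rcases t.mem_A_or_B x with h2 | h2
      · exact Or.inl (Or.inr h2)
      · exact Or.inr ⟨h1, h2⟩
  no_edge := by
    rintro a ⟨haA, haB⟩ b ⟨hbB, hbA⟩ hadj
    by_cases hsB : a ∈ s.B
    · have hatB : a ∉ t.B := fun h => haB ⟨hsB, h⟩
      have hatA : a ∈ t.A := (t.mem_A_or_B a).resolve_right hatB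
      exact t.no_edge a ⟨hatA, hatB⟩ b ⟨hbB.2, fun h => hbA (Or.inr h)⟩ hadj
    · have hasA : a ∈ s.A := (s.mem_A_or_B a).resolve_right hsB
      exact s.no_edge a ⟨hasA, hsB⟩ b ⟨hbB.1, fun h => hbA (Or.inl h)⟩ hadj

/-- The image of a separation under a graph isomorphism. -/
def map (φ : G ≃g G') (s : GraphSep G) : GraphSep G' where
  A := ⇑φ '' s.A
  B := ⇑φ '' s.B
  union_eq := by
    apply Set.eq_univ_of_forall
    intro y
    rcases s.mem_A_or_B (φ.symm y) with h | h
    · exact Or.inl ⟨φ.symm y, h, φ.apply_symm_apply y⟩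
    · exact Or.inr ⟨φ.symm y, h, φ.apply_symm_apply y⟩
  no_edge := by
    rintro a ⟨⟨x, hxA, rfl⟩, haB⟩ b ⟨⟨y, hyB, rfl⟩, hbA⟩ hadj
    exact s.no_edge x ⟨hxA, fun h => haB ⟨x, h, rfl⟩⟩ y ⟨hyB, fun h => hbA ⟨y, h, rfl⟩⟩
      (φ.map_adj_iff.mp hadj)

/-- The neighbourhood of a set of vertices. -/
def nbhd (G : SimpleGraph V) (X : Set V) : Set V := {v | v ∉ X ∧ ∃ x ∈ X, G.Adj v x}

/-- `w` can be reached from `v` by a walk avoiding `X`. -/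
def AvoidReach (G : SimpleGraph V) (X : Set V) (v w : V) : Prop :=
  ∃ p : G.Walk v w, ∀ u ∈ p.support, u ∉ X

/-- `C` is a (connected) component of `G − X`. -/
def IsCompOf (G : SimpleGraph V) (X C : Set V) : Prop :=
  ∃ v, v ∉ X ∧ C = {w | AvoidReach G X v w}

/-- A separation `(A,B)` is tight if each of `A ∖ B` and `B ∖ A` contains a component
of `G − (A ∩ B)` whose neighbourhood is all of `A ∩ B`. -/
def IsTight (s : GraphSep G) : Prop :=
  (∃ C, IsCompOf G s.sepSet C ∧ nbhd G C = s.sepSet ∧ C ⊆ s.A \ s.B) ∧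
  (∃ C, IsCompOf G s.sepSet C ∧ nbhd G C = s.sepSet ∧ C ⊆ s.B \ s.A)

/-- An orientation of `S_k`: it contains only separations of order `< k`, contains
at least one of `s, s⁻¹` for every separation of order `< k`, and contains both only
if they coincide. -/
def IsOrientation (k : ℕ∞) (P : Set (GraphSep G)) : Prop :=
  (∀ s ∈ P, s.order < k) ∧
  (∀ s : GraphSep G, s.order < k → (s ∈ P ∨ s.inv ∈ P)) ∧
  (∀ s ∈ P, s.inv ∈ P → s.inv = s)

/-- Consistency: no two members `r, s` with distinct underlying separations satisfy
`r⁻¹ ≤ s`. -/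
def Consistent (P : Set (GraphSep G)) : Prop :=
  ∀ r ∈ P, ∀ s ∈ P, r.inv.le s → r = s ∨ r = s.inv

/-- A `k`-profile: a consistent orientation of `S_k` satisfying the profile property. -/
def IsProfile (k : ℕ∞) (P : Set (GraphSep G)) : Prop :=
  IsOrientation k P ∧ Consistent P ∧ ∀ s ∈ P, ∀ t ∈ P, (s.join t).inv ∉ P

/-- A profile in `G` is a `k`-profile for some `k ∈ ℕ ∪ {ℵ₀}`. -/
def IsProfileIn (G : SimpleGraph V) (P : Set (GraphSep G)) : Prop := ∃ k : ℕ∞, IsProfile k P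

/-- A profile is regular if it contains no separation of the form `(V, X)`. -/
def RegularP (P : Set (GraphSep G)) : Prop := ∀ s ∈ P, s.A ≠ Set.univ

/-- A profile is bounded if it is a `k`-profile for some finite `k` and is not a subset
of any `ℵ₀`-profile. -/
def BoundedP (P : Set (GraphSep G)) : Prop :=
  (∃ k : ℕ, IsProfile (k : ℕ∞) P) ∧ ∀ Q : Set (GraphSep G), IsProfile ⊤ Q → ¬ P ⊆ Q

/-- `s` distinguishes the profiles `P` and `P'`. -/
def Distinguishes (s : GraphSep G) (P P' : Set (GraphSep G)) : Prop :=
  (s ∈ P ∧ s.inv ∈ P') ∨ (s.inv ∈ P ∧ s ∈ P')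

/-- `s` distinguishes `P` and `P'` efficiently: it has minimum order among all
separations distinguishing `P` and `P'`. -/
def EffDist (s : GraphSep G) (P P' : Set (GraphSep G)) : Prop :=
  Distinguishes s P P' ∧ ∀ t : GraphSep G, Distinguishes t P P' → s.order ≤ t.order

/-- `P` and `P'` are distinguishable: some finite-order separation distinguishes them. -/
def Distinguishable (P P' : Set (GraphSep G)) : Prop :=
  ∃ s : GraphSep G, s.order < ⊤ ∧ Distinguishes s P P'

/-- Robustness of a profile. -/
def RobustP (P : Set (GraphSep G)) : Prop :=
  ∀ s ∈ P, ∀ t : GraphSep G, t.order < ⊤ →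
    (s.join t).order < s.order → (s.join t.inv).order < s.order →
    (s.join t ∈ P ∨ s.join t.inv ∈ P)

/-- A `k`-profile is principal if for every vertex set `X` with `|X| < k` it contains
`(V ∖ C, C ∪ X)` for some component `C` of `G − X`. -/
def PrincipalP (k : ℕ∞) (P : Set (GraphSep G)) : Prop :=
  ∀ X : Set V, X.encard < k →
    ∃ C, IsCompOf G X C ∧ ∃ s ∈ P, s.A = Cᶜ ∧ s.B = C ∪ X

/-- `c` is a corner separation of `s` and `t`. -/
def IsCornerSep (s t c : GraphSep G) : Prop :=
  ∃ s' ∈ ({s, s.inv} : Set (GraphSep G)), ∃ t' ∈ ({t, t.inv} : Set (GraphSep G)),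
    c = s'.join t' ∨ c = (s'.join t').inv

/-- The set `S ⊆ V ∖ {x,y}` separates `x` from `y` in `G`. -/
def SeparatesIn (G : SimpleGraph V) (x y : V) (S : Set V) : Prop :=
  x ∉ S ∧ y ∉ S ∧ ∀ p : G.Walk x y, ∃ u ∈ p.support, u ∈ S

/-- `S` is a `⊆`-minimal `x`–`y`-separator in `G`. -/
def MinSeparator (G : SimpleGraph V) (x y : V) (S : Set V) : Prop :=
  SeparatesIn G x y S ∧ ∀ S' ⊆ S, SeparatesIn G x y S' → S' = S

/-- The separation of `G` induced by an (oriented) edge of a tree-decomposition. -/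
def InducedSep {ι : Type} (T : SimpleGraph ι) (𝒱 : ι → Set V) (x : GraphSep G) : Prop :=
  ∃ t t' : ι, T.Adj t t' ∧
    x.A = (⋃ u ∈ {u : ι | ∃ p : T.Walk u t, s(t, t') ∉ p.edges}, 𝒱 u) ∧
    x.B = (⋃ u ∈ {u : ι | ∃ p : T.Walk u t', s(t, t') ∉ p.edges}, 𝒱 u)

/-- Opposite pairs of corner separations of `s` and `t`. -/
def OppPair (s t c d : GraphSep G) : Prop :=
  (c = s.join t ∧ d = s.inv.join t.inv) ∨ (c = s.inv.join t.inv ∧ d = s.join t) ∨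
  (c = s.join t.inv ∧ d = s.inv.join t) ∨ (c = s.inv.join t ∧ d = s.join t.inv)

end GraphSep
namespace Stmt6Aux
open GraphSep

variable {V : Type} {G : SimpleGraph V}

/-! ### Basic order lemmas for separations -/

lemma sle_refl (s : GraphSep G) : s.le s := ⟨subset_rfl, subset_rfl⟩

lemma sle_trans {a b c : GraphSep G} (h1 : a.le b) (h2 : b.le c) : a.le c :=
  ⟨h1.1.trans h2.1, h2.2.trans h1.2⟩

lemma sep_ext {a b : GraphSep G} (hA : a.A = b.A) (hB : a.B = b.B) : a = b := by
  cases a; cases b; cases hA; cases hB; rfl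

lemma sle_antisymm {a b : GraphSep G} (h1 : a.le b) (h2 : b.le a) : a = b :=
  sep_ext (h1.1.antisymm h2.1) (h2.2.antisymm h1.2)

@[simp] lemma inv_inv (s : GraphSep G) : s.inv.inv = s := rfl

lemma inv_le_inv {a b : GraphSep G} : a.inv.le b.inv ↔ b.le a := And.comm

lemma inv_le_iff {a b : GraphSep G} : a.inv.le b ↔ b.inv.le a := And.comm

lemma le_inv_iff {a b : GraphSep G} : a.le b.inv ↔ b.le a.inv := And.comm

lemma inv_injective : Function.Injective (inv : GraphSep G → GraphSep G) := by
  intro a b h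
  rw [← inv_inv a, h, inv_inv]

/-! ### Hypothesis abbreviations -/

def Hinv (N : Set (GraphSep G)) : Prop := ∀ s ∈ N, s.inv ∈ N

def Hnested (N : Set (GraphSep G)) : Prop := ∀ s ∈ N, ∀ t ∈ N, Nested s t

def Hreg (N : Set (GraphSep G)) : Prop := ∀ s ∈ N, ¬ s.A ⊆ s.B ∧ ¬ s.B ⊆ s.A

def Hchain (N : Set (GraphSep G)) : Prop :=
  ∀ f : ℕ → GraphSep G, (∀ i, f i ∈ N) →
    (∀ i, (f i).le (f (i + 1)) ∧ f i ≠ f (i + 1)) → (⋂ i, (f i).B) = ∅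

/-! ### The star orientation of a separation -/

def Ostar (N : Set (GraphSep G)) (s : GraphSep G) : Set (GraphSep G) :=
  {t | t ∈ N ∧ (t.le s ∨ (t.le s.inv ∧ t ≠ s.inv))}

lemma Ostar_subset (N : Set (GraphSep G)) (s : GraphSep G) : Ostar N s ⊆ N :=
  fun _ ht => ht.1

lemma mem_Ostar_self {N : Set (GraphSep G)} {s : GraphSep G} (hs : s ∈ N) :
    s ∈ Ostar N s := ⟨hs, Or.inl (sle_refl s)⟩

lemma inv_not_mem_Ostar_self {N : Set (GraphSep G)} (hreg : Hreg N) {s : GraphSep G}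
    (hs : s ∈ N) : s.inv ∉ Ostar N s := by
  rintro ⟨-, h | ⟨h, hne⟩⟩
  · exact (hreg s hs).2 h.1
  · exact hne rfl

lemma mem_or_inv_mem {N : Set (GraphSep G)} (hinv : Hinv N) (hnested : Hnested N)
    {s t : GraphSep G} (hs : s ∈ N) (ht : t ∈ N) :
    t ∈ Ostar N s ∨ t.inv ∈ Ostar N s := by
  rcases hnested t ht s hs with h | h | h | h
  · exact Or.inl ⟨ht, Or.inl h⟩
  · by_cases he : t = s.inv
    · subst he; exact Or.inr (mem_Ostar_self hs)
    · exact Or.inl ⟨ht, Or.inr ⟨h, he⟩⟩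
  · exact Or.inr ⟨hinv t ht, Or.inl h⟩
  · by_cases he : t.inv = s.inv
    · left
      have : t = s := inv_injective he
      subst this; exact mem_Ostar_self hs
    · exact Or.inr ⟨hinv t ht, Or.inr ⟨h, he⟩⟩

lemma not_both_mem {N : Set (GraphSep G)} (hreg : Hreg N) {s t : GraphSep G} (hs : s ∈ N) :
    ¬ (t ∈ Ostar N s ∧ t.inv ∈ Ostar N s) := by
  rintro ⟨⟨htN, h1⟩, ⟨-, h2⟩⟩
  rcases h1 with h1 | ⟨h1, hne1⟩ <;> rcases h2 with h2 | ⟨h2, hne2⟩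
  · exact (hreg s hs).2 (h1.2.trans h2.1)
  · exact hne2 (congrArg GraphSep.inv (sle_antisymm h1 (inv_le_inv.mp h2)))
  · exact hne1 (sle_antisymm h1 (inv_le_iff.mp h2))
  · exact (hreg s hs).1 (h2.2.trans h1.1)

lemma Ostar_down {N : Set (GraphSep G)} (hreg : Hreg N) {s r w : GraphSep G} (hs : s ∈ N)
    (hr : r ∈ N) (hrw : r.le w) (hw : w ∈ Ostar N s) : r ∈ Ostar N s := by
  rcases hw.2 with h | ⟨h, hne⟩
  · exact ⟨hr, Or.inl (sle_trans hrw h)⟩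
  · refine ⟨hr, Or.inr ⟨sle_trans hrw h, ?_⟩⟩
    rintro rfl
    have hws : w = s.inv := sle_antisymm h hrw
    rw [hws] at hw
    exact inv_not_mem_Ostar_self hreg hs hw

lemma Ostar_inv_agree {N : Set (GraphSep G)} {s t : GraphSep G} (h1 : t ≠ s) (h2 : t ≠ s.inv) :
    t ∈ Ostar N s ↔ t ∈ Ostar N s.inv := by
  unfold Ostar
  simp only [Set.mem_setOf_eq, inv_inv]
  constructor
  · rintro ⟨htN, h | ⟨h, -⟩⟩
    · exact ⟨htN, Or.inr ⟨h, h1⟩⟩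
    · exact ⟨htN, Or.inl h⟩
  · rintro ⟨htN, h | ⟨h, -⟩⟩
    · exact ⟨htN, Or.inr ⟨h, h2⟩⟩
    · exact ⟨htN, Or.inl h⟩

lemma Ostar_eq_of_maximal {N : Set (GraphSep G)} (hinv : Hinv N) (hnested : Hnested N)
    (hreg : Hreg N) {s u : GraphSep G} (hs : s ∈ N)
    (hu : u ∈ Ostar N s) (hmax : ∀ w ∈ Ostar N s, u.le w → u = w) :
    Ostar N s = Ostar N u := by
  have huN : u ∈ N := hu.1
  ext w
  constructor
  · intro hw
    have hwN : w ∈ N := hw.1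
    rcases mem_or_inv_mem hinv hnested huN hwN with h | h
    · exact h
    · exfalso
      rcases h.2 with hh | ⟨hh, hne⟩
      · exact not_both_mem hreg hs ⟨hw, Ostar_down hreg hs (hinv w hwN) hh hu⟩
      · have he : u = w := hmax w hw (inv_le_inv.mp hh)
        subst he
        exact hne rfl
  · intro hw
    have hwN : w ∈ N := hw.1
    rcases hw.2 with h | ⟨h, hne⟩
    · exact Ostar_down hreg hs hwN h hu
    · rcases mem_or_inv_mem hinv hnested hs hwN with h2 | h2
      · exact h2
      · exfalso
        have h3 : u.le w.inv := le_inv_iff.mp h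
        have h4 := hmax w.inv h2 h3
        exact hne (by rw [h4, inv_inv])

end Stmt6Aux

namespace Stmt6Aux
open GraphSep

variable {V : Type} {G : SimpleGraph V}

/-! ### Existence of maximal elements -/

lemma exists_max_above (P : Set (GraphSep G))
    (hno : ∀ f : ℕ → GraphSep G, (∀ i, f i ∈ P) →
      ¬ (∀ i, (f i).le (f (i + 1)) ∧ f i ≠ f (i + 1)))
    {u : GraphSep G} (hu : u ∈ P) :
    ∃ m ∈ P, u.le m ∧ ∀ w ∈ P, m.le w → m = w := by
  by_contra hcon
  push_neg at hcon
  have step : ∀ x : {x : GraphSep G // x ∈ P ∧ u.le x},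
      ∃ y : {x : GraphSep G // x ∈ P ∧ u.le x}, x.1.le y.1 ∧ x.1 ≠ y.1 := by
    rintro ⟨x, hxP, hux⟩
    obtain ⟨w, hwP, hxw, hne⟩ := hcon x hxP hux
    exact ⟨⟨w, hwP, sle_trans hux hxw⟩, hxw, hne⟩
  choose F hF1 hF2 using step
  set x0 : {x : GraphSep G // x ∈ P ∧ u.le x} := ⟨u, hu, sle_refl u⟩ with hx0
  apply hno (fun n => (F^[n] x0).1) (fun n => (F^[n] x0).2.1)
  intro i
  have hit : F^[i + 1] x0 = F (F^[i] x0) := Function.iterate_succ_apply' F i x0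
  rw [hit]
  exact ⟨hF1 _, hF2 _⟩

/-- No strictly increasing sequences inside a star `Ostar N r`. -/
lemma no_asc_Ostar {N : Set (GraphSep G)} (hreg : Hreg N) (hchain : Hchain N)
    {r : GraphSep G} (hr : r ∈ N) (f : ℕ → GraphSep G) (hf : ∀ i, f i ∈ Ostar N r) :
    ¬ (∀ i, (f i).le (f (i + 1)) ∧ f i ≠ f (i + 1)) := by
  intro hstep
  have hmono : ∀ m n, m ≤ n → (f m).le (f n) := by
    intro m n h
    induction n, h using Nat.le_induction with
    | base => exact sle_refl _
    | succ n _ ih => exact sle_trans ih (hstep n).1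
  have hstrict : ∀ m n, m < n → f m ≠ f n := by
    intro m n h heq
    have h2 : (f (m + 1)).le (f m) := by rw [heq]; exact hmono _ _ h
    exact (hstep m).2 (sle_antisymm (hstep m).1 h2)
  have hcover : {n | (f n).le r} ∪ {n | (f n).le r.inv} = Set.univ := by
    apply Set.eq_univ_of_forall
    intro n
    rcases (hf n).2 with h | ⟨h, -⟩
    · exact Or.inl h
    · exact Or.inr h
  have hinf : {n | (f n).le r}.Infinite ∨ {n | (f n).le r.inv}.Infinite := by
    by_contra h
    push_neg at h
    have := (h.1.union h.2)
    rw [hcover] at this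
    exact Set.infinite_univ this
  have hmain : ∀ s : GraphSep G, {n | (f n).le s}.Infinite → s.B = ∅ := by
    intro s hs
    obtain ⟨φ, hφ, hφP⟩ :=
      Filter.extraction_of_frequently_atTop (Nat.frequently_atTop_iff_infinite.mpr hs)
    have h0 := hchain (fun n => f (φ n)) (fun n => (hf (φ n)).1) ?_
    · apply Set.subset_empty_iff.mp
      rw [← h0]
      apply Set.subset_iInter
      intro i
      exact (hφP i).2
    · intro i
      exact ⟨hmono _ _ (le_of_lt (hφ (Nat.lt_succ_self i))),
        hstrict _ _ (hφ (Nat.lt_succ_self i))⟩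
  rcases hinf with h | h
  · exact (hreg r hr).2 (by rw [hmain r h]; exact Set.empty_subset _)
  · exact (hreg r hr).1 (by
      have : r.inv.B = ∅ := hmain r.inv h
      rw [show r.A = r.inv.B from rfl, this]
      exact Set.empty_subset _)

/-! ### The difference set between two stars -/

def Dset (N : Set (GraphSep G)) (s t : GraphSep G) : Set (GraphSep G) :=
  {u | u ∈ Ostar N t ∧ u.inv ∈ Ostar N s}

lemma Dset_chain {N : Set (GraphSep G)} (hinv : Hinv N) (hnested : Hnested N) (hreg : Hreg N)
    {s t : GraphSep G} (hs : s ∈ N) (ht : t ∈ N) {u w : GraphSep G}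
    (hu : u ∈ Dset N s t) (hw : w ∈ Dset N s t) : u.le w ∨ w.le u := by
  have huN : u ∈ N := hu.1.1
  have hwN : w ∈ N := hw.1.1
  rcases hnested u huN w hwN with h | h | h | h
  · exact Or.inl h
  · exact absurd ⟨Ostar_down hreg hs huN h hw.2, hu.2⟩ (not_both_mem hreg hs)
  · exact absurd ⟨hu.1, Ostar_down hreg ht (hinv u huN) h hw.1⟩ (not_both_mem hreg ht)
  · exact Or.inr (inv_le_inv.mp h)

/-- Auxiliary recursive shrinking sequence for proving finiteness of `Dset`. -/
noncomputable def shrinkSeq (D : Set (GraphSep G)) (hD : D.Infinite)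
    (M : ∀ Q : Set (GraphSep G), Q ⊆ D → Q.Infinite → GraphSep G) :
    ℕ → {Q : Set (GraphSep G) // Q ⊆ D ∧ Q.Infinite}
  | 0 => ⟨D, subset_rfl, hD⟩
  | (n + 1) =>
      let p := shrinkSeq D hD M n
      ⟨p.1 \ {M p.1 p.2.1 p.2.2}, Set.diff_subset.trans p.2.1,
        p.2.2.diff (Set.finite_singleton _)⟩

lemma Dset_finite {N : Set (GraphSep G)} (hinv : Hinv N) (hnested : Hnested N) (hreg : Hreg N)
    (hchain : Hchain N) {s t : GraphSep G} (hs : s ∈ N) (ht : t ∈ N) :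
    (Dset N s t).Finite := by
  by_contra hD
  rw [← Set.not_infinite, not_not] at hD
  have key : ∀ Q : Set (GraphSep G), Q ⊆ Dset N s t → Q.Infinite →
      ∃ m ∈ Q, ∀ w ∈ Q, w.le m := by
    intro Q hQD hQinf
    obtain ⟨q, hq⟩ := hQinf.nonempty
    obtain ⟨m, hmQ, -, hmax⟩ := exists_max_above Q
      (fun f hfQ => no_asc_Ostar hreg hchain ht f (fun i => (hQD (hfQ i)).1)) hq
    refine ⟨m, hmQ, fun w hw => ?_⟩
    rcases Dset_chain hinv hnested hreg hs ht (hQD hmQ) (hQD hw) with h | h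
    · rw [hmax w hw h]; exact sle_refl _
    · exact h
  choose M hM1 hM2 using key
  set H := shrinkSeq (Dset N s t) hD (fun Q h1 h2 => M Q h1 h2) with hH
  set g : ℕ → GraphSep G := fun n => M (H n).1 (H n).2.1 (H n).2.2 with hg
  have hg1 : ∀ n, g n ∈ (H n).1 := fun n => hM1 _ _ _
  have hstepH : ∀ n, (H (n + 1)).1 = (H n).1 \ {g n} := fun n => rfl
  have hdesc : ∀ n, (g (n + 1)).le (g n) ∧ g (n + 1) ≠ g n := by
    intro n
    have h1 : g (n + 1) ∈ (H n).1 \ {g n} := by rw [← hstepH]; exact hg1 (n + 1)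
    exact ⟨hM2 (H n).1 (H n).2.1 (H n).2.2 _ h1.1, fun he => h1.2 he⟩
  apply no_asc_Ostar hreg hchain hs (fun n => (g n).inv)
    (fun n => ((H n).2.1 (hg1 n)).2)
  intro i
  refine ⟨inv_le_inv.mpr (hdesc i).1, fun he => (hdesc i).2 (inv_injective he).symm⟩

end Stmt6Aux

namespace Stmt6Aux
open GraphSep

variable {V : Type} {G : SimpleGraph V}

/-! ### The decomposition tree -/

def Nodes (N : Set (GraphSep G)) : Type := {O : Set (GraphSep G) // ∃ s ∈ N, Ostar N s = O}

def nodeO {N : Set (GraphSep G)} {s : GraphSep G} (hs : s ∈ N) : Nodes N :=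
  ⟨Ostar N s, s, hs, rfl⟩

def TGraph {N : Set (GraphSep G)} (hinv : Hinv N) (hreg : Hreg N) : SimpleGraph (Nodes N) where
  Adj X Y := ∃ w ∈ N, X.1 = Ostar N w ∧ Y.1 = Ostar N w.inv
  symm := by
    refine ⟨?_⟩
    rintro X Y ⟨w, hw, hX, hY⟩
    refine ⟨w.inv, hinv w hw, hY, ?_⟩
    rw [inv_inv]; exact hX
  loopless := by
    refine ⟨?_⟩
    rintro X ⟨w, hw, hX, hX'⟩
    have h1 : w ∈ X.1 := by rw [hX]; exact mem_Ostar_self hw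
    have h2 : w ∉ X.1 := by
      rw [hX']
      exact inv_not_mem_Ostar_self hreg (hinv w hw)
    exact h2 h1

/-- The bag of a node: all vertices lying in `B` for every separation `(A,B)` oriented
towards the node. -/
def bag {N : Set (GraphSep G)} (Z : Nodes N) : Set V := {v | ∀ t ∈ Z.1, v ∈ t.B}

lemma step_flip {N : Set (GraphSep G)} {hinv : Hinv N} {hreg : Hreg N} {X Y : Nodes N}
    (h : (TGraph hinv hreg).Adj X Y) {u : GraphSep G} (hXu : u ∉ X.1) (hYu : u ∈ Y.1) :
    X.1 = Ostar N u.inv ∧ Y.1 = Ostar N u := by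
  obtain ⟨z, hz, hX, hY⟩ := h
  by_cases h1 : u = z
  · subst h1
    exfalso
    rw [hY] at hYu
    exact inv_not_mem_Ostar_self hreg (hinv u (hYu.1)) hYu
  · by_cases h2 : u = z.inv
    · subst h2
      exact ⟨by rw [hX, inv_inv], hY⟩
    · exfalso
      rw [hX] at hXu
      rw [hY] at hYu
      exact hXu ((Ostar_inv_agree h1 h2).mpr hYu)

lemma flip_mem_edges {N : Set (GraphSep G)} {hinv : Hinv N} {hreg : Hreg N} {X Y : Nodes N}
    (p : (TGraph hinv hreg).Walk X Y) {u : GraphSep G} (huN : u ∈ N) :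
    u ∉ X.1 → u ∈ Y.1 →
      s(nodeO (hinv u huN), nodeO huN) ∈ p.edges := by
  induction p with
  | nil => intro hX hY; exact absurd hY hX
  | @cons X M Y h q ih =>
    intro hX hY
    by_cases hM : u ∈ M.1
    · obtain ⟨e1, e2⟩ := step_flip h hX hM
      have hX' : X = nodeO (hinv u huN) := Subtype.ext e1
      have hM' : M = nodeO huN := Subtype.ext e2
      rw [SimpleGraph.Walk.edges_cons]
      exact List.mem_cons.mpr (Or.inl (by rw [hX', hM']))
    · rw [SimpleGraph.Walk.edges_cons]
      exact List.mem_cons.mpr (Or.inr (ih hM hY))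

lemma avoid_edges {N : Set (GraphSep G)} {hinv : Hinv N} {hreg : Hreg N} {Z X : Nodes N}
    (p : (TGraph hinv hreg).Walk Z X) {u : GraphSep G} (huN : u ∈ N) :
    p.IsTrail → u ∈ Z.1 → u ∈ X.1 →
      s(nodeO (hinv u huN), nodeO huN) ∉ p.edges := by
  induction p with
  | nil => intro _ _ _; simp
  | @cons Z M X h q ih =>
    intro hp hZ hX
    rw [SimpleGraph.Walk.isTrail_cons] at hp
    rw [SimpleGraph.Walk.edges_cons, List.mem_cons]
    rintro (he | he)
    · rcases Sym2.eq_iff.mp he with ⟨h1, h2⟩ | ⟨h1, h2⟩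
      · -- Z = nodeO u.inv : but u ∈ Z.1 = Ostar N u.inv, contradiction
        have : u ∈ Ostar N u.inv := by
          have := hZ
          rw [← h1] at this
          exact this
        exact inv_not_mem_Ostar_self hreg (hinv u huN) this
      · -- Z = nodeO u, M = nodeO u.inv, and u ∉ M
        have hM : u ∉ M.1 := by
          rw [← h1]
          exact inv_not_mem_Ostar_self hreg (hinv u huN)
        have hmem := flip_mem_edges q huN hM hX
        apply hp.2
        have : s(Z, M) = s(nodeO (hinv u huN), nodeO huN) := by
          rw [← h1, ← h2, Sym2.eq_swap]
        rw [this]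
        exact hmem
    · by_cases hM : u ∈ M.1
      · exact ih hp.1 hM hX he
      · -- u ∈ Z, u ∉ M: the first edge is the flip edge, and q flips back: contradiction
        obtain ⟨e1, e2⟩ := step_flip h.symm hM hZ
        have hmem := flip_mem_edges q huN hM hX
        apply hp.2
        have : s(Z, M) = s(nodeO (hinv u huN), nodeO huN) := by
          have hZ' : Z = nodeO huN := Subtype.ext e2
          have hM' : M = nodeO (hinv u huN) := Subtype.ext e1
          rw [hZ', hM', Sym2.eq_swap]
        rw [this]
        exact hmem

/-! ### Connectivity -/

lemma Ostar_eq_of_D_empty {N : Set (GraphSep G)} (hinv : Hinv N) (hnested : Hnested N)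
    (hreg : Hreg N) {s t : GraphSep G} (hs : s ∈ N) (ht : t ∈ N)
    (h : Dset N s t = ∅) : Ostar N s = Ostar N t := by
  ext w
  constructor
  · intro hw
    have hwN : w ∈ N := hw.1
    rcases mem_or_inv_mem hinv hnested ht hwN with h2 | h2
    · exact h2
    · exfalso
      have : w.inv ∈ Dset N s t := ⟨h2, by rw [inv_inv]; exact hw⟩
      rw [h] at this
      exact this
  · intro hw
    have hwN : w ∈ N := hw.1
    rcases mem_or_inv_mem hinv hnested hs hwN with h2 | h2
    · exact h2
    · exfalso
      have : w ∈ Dset N s t := ⟨hw, h2⟩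
      rw [h] at this
      exact this

lemma Dset_inv_erase {N : Set (GraphSep G)} (hinv : Hinv N) (hreg : Hreg N)
    {s t m : GraphSep G} (hs : s ∈ N) (ht : t ∈ N)
    (hm : m ∈ Dset N s t) (heq : Ostar N t = Ostar N m) :
    Dset N s m.inv = Dset N s t \ {m} := by
  have hmN : m ∈ N := hm.1.1
  ext w
  constructor
  · rintro ⟨hw1, hw2⟩
    have hwm : w ≠ m := by
      rintro rfl
      exact inv_not_mem_Ostar_self hreg (hinv w hmN) hw1
    have hwm2 : w ≠ m.inv := by
      rintro rfl
      exact not_both_mem hreg hs ⟨hw2, hm.2⟩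
    refine ⟨⟨?_, hw2⟩, hwm⟩
    rw [heq]
    exact (Ostar_inv_agree hwm hwm2).mpr hw1
  · rintro ⟨⟨hw1, hw2⟩, hwm⟩
    have hwm' : w ≠ m := hwm
    have hwm2 : w ≠ m.inv := by
      rintro rfl
      rw [heq] at hw1
      exact not_both_mem hreg hmN ⟨mem_Ostar_self hmN, hw1⟩
    refine ⟨?_, hw2⟩
    rw [heq] at hw1
    exact (Ostar_inv_agree hwm' hwm2).mp hw1

lemma reach_aux {N : Set (GraphSep G)} (hinv : Hinv N) (hnested : Hnested N) (hreg : Hreg N)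
    (hchain : Hchain N) :
    ∀ n : ℕ, ∀ s t : GraphSep G, ∀ hs : s ∈ N, ∀ ht : t ∈ N,
      (Dset N s t).ncard ≤ n → (TGraph hinv hreg).Reachable (nodeO hs) (nodeO ht) := by
  intro n
  induction n with
  | zero =>
    intro s t hs ht hcard
    have hfinD := Dset_finite hinv hnested hreg hchain hs ht
    have hD : Dset N s t = ∅ := (Set.ncard_eq_zero hfinD).mp (Nat.le_zero.mp hcard)
    have heq := Ostar_eq_of_D_empty hinv hnested hreg hs ht hD
    have : (nodeO hs : Nodes N) = nodeO ht := Subtype.ext heq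
    rw [this]
  | succ n ih =>
    intro s t hs ht hcard
    by_cases heq : Ostar N s = Ostar N t
    · have : (nodeO hs : Nodes N) = nodeO ht := Subtype.ext heq
      rw [this]
    · have hfinD := Dset_finite hinv hnested hreg hchain hs ht
      have hDne : (Dset N s t).Nonempty := by
        by_contra h
        rw [Set.not_nonempty_iff_eq_empty] at h
        exact heq (Ostar_eq_of_D_empty hinv hnested hreg hs ht h)
      obtain ⟨q0, hq0⟩ := hDne
      obtain ⟨m, hmD, -, hmaxD⟩ := exists_max_above (Dset N s t)
        (fun f hf => no_asc_Ostar hreg hchain ht f (fun i => (hf i).1)) hq0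
      have hmN : m ∈ N := hmD.1.1
      -- m is maximal in Ostar N t
      have hmax' : ∀ w ∈ Ostar N t, m.le w → m = w := by
        intro w hw hle
        by_cases hwm : w = m
        · exact hwm.symm
        · rcases mem_or_inv_mem hinv hnested hs hw.1 with h2 | h2
          · exfalso
            exact not_both_mem hreg hs ⟨Ostar_down hreg hs hmN hle h2, hmD.2⟩
          · exact hmaxD w ⟨hw, h2⟩ hle
      have hOeq : Ostar N t = Ostar N m :=
        Ostar_eq_of_maximal hinv hnested hreg ht hmD.1 hmax'
      have hDeq := Dset_inv_erase hinv hreg hs ht hmD hOeq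
      have hcard' : (Dset N s m.inv).ncard ≤ n := by
        rw [hDeq]
        have := Set.ncard_diff_singleton_lt_of_mem hmD hfinD
        omega
      have hr1 := ih s m.inv hs (hinv m hmN) hcard'
      have hadj : (TGraph hinv hreg).Adj (nodeO (hinv m hmN)) (nodeO hmN) := by
        refine ⟨m.inv, hinv m hmN, rfl, ?_⟩
        show Ostar N m = Ostar N m.inv.inv
        rw [inv_inv]
      have : (nodeO hmN : Nodes N) = nodeO ht := Subtype.ext hOeq.symm
      rw [← this]
      exact hr1.trans hadj.reachable

lemma TGraph_preconn {N : Set (GraphSep G)} (hinv : Hinv N) (hnested : Hnested N)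
    (hreg : Hreg N) (hchain : Hchain N) :
    ∀ A B : Nodes N, (TGraph hinv hreg).Reachable A B := by
  rintro ⟨OA, sA, hsA, hOA⟩ ⟨OB, sB, hsB, hOB⟩
  have e1 : (⟨OA, ⟨sA, hsA, hOA⟩⟩ : Nodes N) = nodeO hsA := Subtype.ext hOA.symm
  have e2 : (⟨OB, ⟨sB, hsB, hOB⟩⟩ : Nodes N) = nodeO hsB := Subtype.ext hOB.symm
  rw [e1, e2]
  exact reach_aux hinv hnested hreg hchain (Dset N sA sB).ncard sA sB hsA hsB le_rfl

lemma TGraph_acyclic {N : Set (GraphSep G)} (hinv : Hinv N) (hnested : Hnested N)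
    (hreg : Hreg N) : (TGraph hinv hreg).IsAcyclic := by
  intro X c hc
  cases c with
  | nil => exact hc.ne_nil rfl
  | @cons X M _ h q =>
    obtain ⟨w, hwN, hX, hM⟩ := h
    have hwX : w ∈ X.1 := by rw [hX]; exact mem_Ostar_self hwN
    have hwM : w ∉ M.1 := by
      rw [hM]
      exact inv_not_mem_Ostar_self hreg (hinv w hwN)
    have hmem := flip_mem_edges q hwN hwM hwX
    have htrail := hc.isCircuit.isTrail
    replace htrail := (SimpleGraph.Walk.isTrail_cons _ _).mp htrail
    apply htrail.2
    have e1 : X = nodeO hwN := Subtype.ext hX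
    have e2 : M = nodeO (hinv w hwN) := Subtype.ext hM
    have e3 : s(X, M) = s(nodeO (hinv w hwN), nodeO hwN) := by
      rw [e1, e2, Sym2.eq_swap]
    rw [e3]
    exact hmem

end Stmt6Aux

namespace Stmt6Aux
open GraphSep

variable {V : Type} {G : SimpleGraph V}

/-- The union of the bags on the `X`-side of the edge `{X, Y}` corresponding to the
separation `u` (oriented so that `X` carries `Ostar N u`) is exactly `u.B`. -/
lemma side_union {N : Set (GraphSep G)} (hinv : Hinv N) (hnested : Hnested N)
    (hreg : Hreg N) (hchain : Hchain N)
    (hconn : ∀ A B : Nodes N, (TGraph hinv hreg).Reachable A B)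
    {u : GraphSep G} (huN : u ∈ N) (X Y : Nodes N)
    (hX : X.1 = Ostar N u) (hY : Y.1 = Ostar N u.inv) :
    (⋃ Z ∈ {Z : Nodes N | ∃ p : (TGraph hinv hreg).Walk Z X, s(Y, X) ∉ p.edges},
      bag Z) = u.B := by
  classical
  have eX : X = nodeO huN := Subtype.ext hX
  have eY : Y = nodeO (hinv u huN) := Subtype.ext hY
  subst eX
  subst eY
  apply Set.Subset.antisymm
  · intro v hv
    simp only [Set.mem_iUnion, Set.mem_setOf_eq] at hv
    obtain ⟨Z, ⟨p, hp⟩, hvZ⟩ := hv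
    by_cases hZ : u ∈ Z.1
    · exact hvZ u hZ
    · exact absurd (flip_mem_edges p huN hZ (mem_Ostar_self huN)) hp
  · intro v hv
    have hno : ∀ f : ℕ → GraphSep G, (∀ i, f i ∈ {t | t ∈ N ∧ v ∈ t.B}) →
        ¬ (∀ i, (f i).le (f (i + 1)) ∧ f i ≠ f (i + 1)) := by
      intro f hf hsteps
      have h0 := hchain f (fun i => (hf i).1) hsteps
      have hvv : v ∈ ⋂ i, (f i).B := Set.mem_iInter.mpr fun i => (hf i).2
      rw [h0] at hvv
      exact hvv
    obtain ⟨m, hmP, hum, hmax⟩ := exists_max_above {t | t ∈ N ∧ v ∈ t.B} hno ⟨huN, hv⟩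
    have hmN : m ∈ N := hmP.1
    have hbag : v ∈ bag (nodeO hmN) := by
      intro t ht
      rcases ht.2 with h | ⟨h, hne⟩
      · exact h.2 hmP.2
      · by_cases hvt : v ∈ t.B
        · exact hvt
        · exfalso
          have hvA : v ∈ t.A := (t.mem_A_or_B v).resolve_right hvt
          have hm : m = t.inv := hmax t.inv ⟨hinv t ht.1, hvA⟩ (le_inv_iff.mp h)
          exact hne (by rw [hm, inv_inv])
    have hmemZ : u ∈ (nodeO hmN : Nodes N).1 := ⟨huN, Or.inl hum⟩
    apply Set.mem_biUnion ?_ hbag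
    obtain ⟨wk⟩ := hconn (nodeO hmN) (nodeO huN)
    exact ⟨wk.toPath.1, avoid_edges wk.toPath.1 huN wk.toPath.2.isTrail hmemZ
      (mem_Ostar_self huN)⟩

/-- Existence of a node whose bag contains a given set `S` of vertices, provided every
separation in `N` has `S` entirely on one side. -/
lemma exists_bag {N : Set (GraphSep G)} (hinv : Hinv N) (hchain : Hchain N)
    {S : Set V} (hSne : S.Nonempty)
    {u0 : GraphSep G} (hu0 : u0 ∈ N) (hu0S : S ⊆ u0.B)
    (hS : ∀ t, t ∈ N → ¬ S ⊆ t.A → S ⊆ t.B) :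
    ∃ (m : GraphSep G) (hmN : m ∈ N), S ⊆ bag (nodeO hmN) := by
  obtain ⟨v0, hv0⟩ := hSne
  have hno : ∀ f : ℕ → GraphSep G, (∀ i, f i ∈ {t | t ∈ N ∧ S ⊆ t.B}) →
      ¬ (∀ i, (f i).le (f (i + 1)) ∧ f i ≠ f (i + 1)) := by
    intro f hf hsteps
    have h0 := hchain f (fun i => (hf i).1) hsteps
    have hvv : v0 ∈ ⋂ i, (f i).B := Set.mem_iInter.mpr fun i => (hf i).2 hv0
    rw [h0] at hvv
    exact hvv
  obtain ⟨m, hmP, -, hmax⟩ := exists_max_above {t | t ∈ N ∧ S ⊆ t.B} hno ⟨hu0, hu0S⟩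
  have hmN : m ∈ N := hmP.1
  refine ⟨m, hmN, ?_⟩
  intro v hvS t ht
  rcases ht.2 with h | ⟨h, hne⟩
  · exact h.2 (hmP.2 hvS)
  · by_cases hSt : S ⊆ t.A
    · exfalso
      have hm : m = t.inv := hmax t.inv ⟨hinv t ht.1, hSt⟩ (le_inv_iff.mp h)
      exact hne (by rw [hm, inv_inv])
    · exact hS t ht.1 hSt hvS

lemma pair_side {v w : V} (hadj : G.Adj v w) (t : GraphSep G) :
    ({v, w} : Set V) ⊆ t.A ∨ ({v, w} : Set V) ⊆ t.B := by
  have hins : ∀ (C : Set V), v ∈ C → w ∈ C → ({v, w} : Set V) ⊆ C := by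
    intro C h1 h2 x hx
    rcases hx with rfl | rfl
    · exact h1
    · exact h2
  by_cases hvA : v ∈ t.A <;> by_cases hwA : w ∈ t.A
  · exact Or.inl (hins _ hvA hwA)
  · -- w ∈ B \ A
    have hwB : w ∈ t.B := (t.mem_A_or_B w).resolve_left hwA
    right
    apply hins _ ?_ hwB
    by_contra hvB
    exact t.no_edge v ⟨hvA, hvB⟩ w ⟨hwB, hwA⟩ hadj
  · have hvB : v ∈ t.B := (t.mem_A_or_B v).resolve_left hvA
    right
    apply hins _ hvB ?_
    by_contra hwB
    exact t.no_edge w ⟨hwA, hwB⟩ v ⟨hvB, hvA⟩ hadj.symm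
  · exact Or.inr (hins _ ((t.mem_A_or_B v).resolve_left hvA)
      ((t.mem_A_or_B w).resolve_left hwA))

/-- The path condition (T3) for the bags. -/
lemma bags_path {N : Set (GraphSep G)} {hinv : Hinv N} {hreg : Hreg N}
    {t1 t2 t3 : Nodes N} (p : (TGraph hinv hreg).Walk t1 t3) (hp : p.IsPath)
    (h2 : t2 ∈ p.support) : bag t1 ∩ bag t3 ⊆ bag t2 := by
  classical
  rintro v ⟨hv1, hv3⟩ u hu
  by_contra hvB
  obtain ⟨s2, hs2, hO2⟩ := t2.2
  have huN : u ∈ N := by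
    rw [← hO2] at hu
    exact hu.1
  have h1 : u ∉ t1.1 := fun hmem => hvB (hv1 u hmem)
  have h3 : u ∉ t3.1 := fun hmem => hvB (hv3 u hmem)
  have hq := flip_mem_edges (p.takeUntil t2 h2) huN h1 hu
  have hr := flip_mem_edges (p.dropUntil t2 h2).reverse huN h3 hu
  have hnodup : ((p.takeUntil t2 h2).edges ++ (p.dropUntil t2 h2).edges).Nodup := by
    have hh := hp.isTrail.edges_nodup
    rw [← SimpleGraph.Walk.take_spec p h2, SimpleGraph.Walk.edges_append] at hh
    exact hh
  rw [List.nodup_append] at hnodup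
  apply hnodup.2.2 _ hq _ ?_ rfl
  rw [SimpleGraph.Walk.edges_reverse, List.mem_reverse] at hr
  exact hr

end Stmt6Aux

open GraphSep Stmt6Aux in
/-- a regular tree set of finite-order separations all of whose ω-chains
have empty intersection of the big sides induces a tree-decomposition. -/
theorem stmt6 {V : Type} (G : SimpleGraph V) (N : Set (GraphSep G))
    (hfin : ∀ s ∈ N, s.order < ⊤)
    (hinv : ∀ s ∈ N, s.inv ∈ N)
    (hnested : ∀ s ∈ N, ∀ t ∈ N, Nested s t)
    (hreg : ∀ s ∈ N, ¬ s.A ⊆ s.B ∧ ¬ s.B ⊆ s.A)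
    (hchain : ∀ f : ℕ → GraphSep G, (∀ i, f i ∈ N) →
      (∀ i, (f i).le (f (i + 1)) ∧ f i ≠ f (i + 1)) → (⋂ i, (f i).B) = ∅) :
    ∃ (ι : Type) (T : SimpleGraph ι) (_ : T.IsTree) (𝒱 : ι → Set V),
      (∀ v : V, ∃ t : ι, v ∈ 𝒱 t) ∧
      (∀ v w : V, G.Adj v w → ∃ t : ι, v ∈ 𝒱 t ∧ w ∈ 𝒱 t) ∧
      (∀ (t₁ t₂ t₃ : ι) (p : T.Walk t₁ t₃), p.IsPath → t₂ ∈ p.support →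
        𝒱 t₁ ∩ 𝒱 t₃ ⊆ 𝒱 t₂) ∧
      {x : GraphSep G | InducedSep T 𝒱 x} = N := by
  classical
  rcases Set.eq_empty_or_nonempty N with hNe | hne
  · -- trivial case: `N = ∅`, single-node tree
    subst hNe
    refine ⟨Unit, ⊥, ⟨SimpleGraph.Connected.mk ?_, ?_⟩, fun _ => Set.univ, ?_, ?_, ?_, ?_⟩
    · intro a b
      cases a; cases b
      exact SimpleGraph.Reachable.refl _
    · intro v c hc
      cases c with
      | nil => exact hc.ne_nil rfl
      | cons h q => exact h
    · intro v; exact ⟨(), Set.mem_univ v⟩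
    · intro v w _; exact ⟨(), Set.mem_univ v, Set.mem_univ w⟩
    · intro _ _ _ _ _ _ x _; exact Set.mem_univ x
    · ext x
      simp only [Set.mem_setOf_eq, Set.mem_empty_iff_false, iff_false]
      rintro ⟨t, t', hadj, -⟩
      exact hadj
  · obtain ⟨s0, hs0⟩ := hne
    have hinv' : Hinv N := hinv
    have hnest' : Hnested N := hnested
    have hreg' : Hreg N := hreg
    have hchain' : Hchain N := hchain
    have hconn := TGraph_preconn hinv' hnest' hreg' hchain'
    have : Nonempty (Nodes N) := ⟨nodeO hs0⟩
    refine ⟨Nodes N, TGraph hinv' hreg',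
      ⟨SimpleGraph.Connected.mk hconn, TGraph_acyclic hinv' hnest' hreg'⟩,
      bag, ?_, ?_, ?_, ?_⟩
    · -- (T1) every vertex lies in some bag
      intro v
      have hS : ∀ t, t ∈ N → ¬ ({v} : Set V) ⊆ t.A → ({v} : Set V) ⊆ t.B := by
        intro t _ hnA x hx
        have hxv : x = v := hx
        subst hxv
        rcases t.mem_A_or_B x with h | h
        · exact absurd (fun y hy => by rw [show y = x from hy]; exact h) hnA
        · exact h
      rcases s0.mem_A_or_B v with hv | hv
      · obtain ⟨m, hmN, hbag⟩ := exists_bag hinv' hchain' (Set.singleton_nonempty v)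
          (hinv' s0 hs0) (fun x hx => by rw [show x = v from hx]; exact hv) hS
        exact ⟨nodeO hmN, hbag rfl⟩
      · obtain ⟨m, hmN, hbag⟩ := exists_bag hinv' hchain' (Set.singleton_nonempty v)
          hs0 (fun x hx => by rw [show x = v from hx]; exact hv) hS
        exact ⟨nodeO hmN, hbag rfl⟩
    · -- (T2) every edge lies in some bag
      intro v w hadj
      have hS : ∀ t, t ∈ N → ¬ ({v, w} : Set V) ⊆ t.A → ({v, w} : Set V) ⊆ t.B :=
        fun t _ hnA => (pair_side hadj t).resolve_left hnA
      rcases pair_side hadj s0 with h | h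
      · obtain ⟨m, hmN, hbag⟩ := exists_bag hinv' hchain'
          ⟨v, Set.mem_insert _ _⟩ (hinv' s0 hs0) h hS
        exact ⟨nodeO hmN, hbag (Set.mem_insert _ _),
          hbag (Set.mem_insert_of_mem _ rfl)⟩
      · obtain ⟨m, hmN, hbag⟩ := exists_bag hinv' hchain'
          ⟨v, Set.mem_insert _ _⟩ hs0 h hS
        exact ⟨nodeO hmN, hbag (Set.mem_insert _ _),
          hbag (Set.mem_insert_of_mem _ rfl)⟩
    · -- (T3)
      intro t₁ t₂ t₃ p hp h2
      exact bags_path p hp h2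
    · -- induced separations are exactly `N`
      ext x
      simp only [Set.mem_setOf_eq]
      constructor
      · rintro ⟨t, t', ⟨w, hwN, hT, hT'⟩, hA, hB⟩
        have hswap : (s(t, t') : Sym2 (Nodes N)) = s(t', t) := Sym2.eq_swap
        have hA' : x.A = w.B := by
          rw [hA, hswap]
          exact side_union hinv' hnest' hreg' hchain' hconn hwN t t' hT hT'
        have hB' : x.B = w.A := by
          rw [hB]
          exact side_union hinv' hnest' hreg' hchain' hconn (hinv' w hwN) t' t hT'
            (by rw [Stmt6Aux.inv_inv]; exact hT)
        have hx : x = w.inv := sep_ext hA' hB'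
        rw [hx]
        exact hinv' w hwN
      · intro hx
        refine ⟨nodeO (hinv' x hx), nodeO hx, ⟨x.inv, hinv' x hx, rfl, ?_⟩, ?_, ?_⟩
        · show Ostar N x = Ostar N x.inv.inv
          rw [Stmt6Aux.inv_inv]
        · have hswap : (s(nodeO (hinv' x hx), nodeO hx) : Sym2 (Nodes N))
              = s(nodeO hx, nodeO (hinv' x hx)) := Sym2.eq_swap
          rw [hswap]
          exact (side_union hinv' hnest' hreg' hchain' hconn (hinv' x hx)
            (nodeO (hinv' x hx)) (nodeO hx) rfl
            (by show Ostar N x = Ostar N x.inv.inv; rw [Stmt6Aux.inv_inv])).symm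
        · exact (side_union hinv' hnest' hreg' hchain' hconn hx
            (nodeO hx) (nodeO (hinv' x hx)) rfl rfl).symm
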